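/- Let P_{XY} be a probability distribution on a finite space Ω_X × Ω_Y with marginals P_X and P_Y, and let r, s ∈ [1, ∞). Then the following are equivalent: (1) for all functions f : Ω_X → ℝ and g : Ω_Y → ℝ, E_{(X,Y)∼P_{XY}}[f(X)g(Y)] ≤ (E_{X∼P_X}[|f(X)|^r])^{1/r} · (E_{Y∼P_Y}[|g(Y)|^s])^{1/s}; (2) for all probability distributions Q_{XY} absolutely continuous with respect to P_{XY}, with marginals Q_X and Q_Y, one has D(Q_{XY}‖P_{XY}) ≥ D(Q_X‖P_X)/r + D(Q_Y‖P_Y)/s. -/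

import Mathlib

open scoped BigOperators

open Finset in

lemma gibbs {ι : Type*} [Fintype ι] (q p : ι → ℝ)
    (hq0 : ∀ i, 0 ≤ q i) (hp0 : ∀ i, 0 ≤ p i) (hq1 : ∑ i, q i = 1)
    (habs : ∀ i, p i = 0 → q i = 0) :
    -Real.log (∑ i, p i) ≤ ∑ i, q i * Real.log (q i / p i) := by
  set S := ∑ i, p i with hS
  -- S > 0
  have hqpos : ∃ i, 0 < q i := by
    by_contra hcon
    push_neg at hcon
    have : ∀ i, q i = 0 := fun i => le_antisymm (hcon i) (hq0 i)
    simp [this] at hq1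
  obtain ⟨i₀, hi₀⟩ := hqpos
  have hpi₀ : 0 < p i₀ := by
    rcases (hp0 i₀).lt_or_eq with h | h
    · exact h
    · exact absurd (habs i₀ h.symm) (ne_of_gt hi₀)
  have hSpos : 0 < S := lt_of_lt_of_le hpi₀ (single_le_sum (fun i _ => hp0 i) (mem_univ i₀))
  -- pointwise bound
  have key : ∑ i, q i * Real.log (p i / (q i * S)) ≤ 0 := by
    have hb : ∀ i, q i * Real.log (p i / (q i * S)) ≤ p i / S - q i := by
      intro i
      rcases (hq0 i).lt_or_eq with h | h
      · have hpi : 0 < p i := by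
          rcases (hp0 i).lt_or_eq with h' | h'
          · exact h'
          · exact absurd (habs i h'.symm) (ne_of_gt h)
        have hx : 0 < p i / (q i * S) := div_pos hpi (mul_pos h hSpos)
        calc q i * Real.log (p i / (q i * S)) ≤ q i * (p i / (q i * S) - 1) :=
              mul_le_mul_of_nonneg_left (Real.log_le_sub_one_of_pos hx) (le_of_lt h)
          _ = p i / S - q i := by field_simp
      · simp [← h, div_nonneg (hp0 i) (le_of_lt hSpos)]
    calc ∑ i, q i * Real.log (p i / (q i * S)) ≤ ∑ i, (p i / S - q i) :=
          sum_le_sum fun i _ => hb i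
      _ = 0 := by rw [sum_sub_distrib, ← sum_div, ← hS, div_self (ne_of_gt hSpos), hq1, sub_self]
  -- rewrite
  have hrw : ∀ i, q i * Real.log (q i / p i)
      = -(q i * Real.log (p i / (q i * S))) - q i * Real.log S := by
    intro i
    rcases (hq0 i).lt_or_eq with h | h
    · have hpi : 0 < p i := by
        rcases (hp0 i).lt_or_eq with h' | h'
        · exact h'
        · exact absurd (habs i h'.symm) (ne_of_gt h)
      have : p i / (q i * S) = (q i / p i)⁻¹ / S := by
        field_simp
      rw [this, Real.log_div (by positivity) (ne_of_gt hSpos), Real.log_inv]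
      ring
    · simp [← h]
  calc -Real.log S = -(0:ℝ) - 1 * Real.log S + 0 := by ring
    _ ≤ -(∑ i, q i * Real.log (p i / (q i * S))) - (∑ i, q i) * Real.log S + 0 := by
        rw [hq1]
        exact add_le_add_left (sub_le_sub_right (neg_le_neg key) _) 0
    _ = ∑ i, q i * Real.log (q i / p i) := by
        rw [← Finset.sum_neg_distrib, Finset.sum_mul, ← Finset.sum_sub_distrib, add_zero]
        exact (Finset.sum_congr rfl fun i _ => (hrw i).symm)


open Finset in
lemma dv_aux {ι : Type*} [Fintype ι] (q p w : ι → ℝ)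
    (hq0 : ∀ i, 0 ≤ q i) (hp0 : ∀ i, 0 ≤ p i) (hq1 : ∑ i, q i = 1)
    (habs : ∀ i, p i = 0 → q i = 0) (hw : ∀ i, 0 < w i) :
    ∑ i, q i * Real.log (w i) - Real.log (∑ i, p i * w i)
      ≤ ∑ i, q i * Real.log (q i / p i) := by
  have h := gibbs q (fun i => p i * w i) hq0
    (fun i => mul_nonneg (hp0 i) (le_of_lt (hw i))) hq1
    (fun i hi => habs i (by
      rcases mul_eq_zero.1 hi with h' | h'
      · exact h'
      · exact absurd h' (ne_of_gt (hw i))))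
  have hrw : ∀ i, q i * Real.log (q i / (p i * w i))
      = q i * Real.log (q i / p i) - q i * Real.log (w i) := by
    intro i
    rcases (hq0 i).lt_or_eq with h' | h'
    · have hpi : 0 < p i := by
        rcases (hp0 i).lt_or_eq with h'' | h''
        · exact h''
        · exact absurd (habs i h''.symm) (ne_of_gt h')
      rw [show q i / (p i * w i) = (q i / p i) / w i by field_simp,
        Real.log_div (by positivity) (ne_of_gt (hw i))]
      ring
    · simp [← h']
  rw [funext hrw, sum_sub_distrib] at h
  linarith

open Finset in
lemma forward {ΩX ΩY : Type*} [Fintype ΩX] [Fintype ΩY]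
    (P : ΩX × ΩY → ℝ) (hP : ∀ z, 0 ≤ P z) (hP1 : ∑ z, P z = 1)
    (r s : ℝ) (hr : 1 ≤ r) (hs : 1 ≤ s)
    (hHC : ∀ (f : ΩX → ℝ) (g : ΩY → ℝ),
        ∑ z, P z * f z.1 * g z.2
          ≤ (∑ x, (∑ y, P (x, y)) * |f x| ^ r) ^ (1 / r)
            * (∑ y, (∑ x, P (x, y)) * |g y| ^ s) ^ (1 / s))
    (Q : ΩX × ΩY → ℝ) (hQ0 : ∀ z, 0 ≤ Q z) (hQ1 : ∑ z, Q z = 1)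
    (habs : ∀ z, P z = 0 → Q z = 0) :
    ∑ z, Q z * Real.log (Q z / P z)
      ≥ (∑ x, (∑ y, Q (x, y)) * Real.log ((∑ y, Q (x, y)) / (∑ y, P (x, y)))) / r
        + (∑ y, (∑ x, Q (x, y)) * Real.log ((∑ x, Q (x, y)) / (∑ x, P (x, y)))) / s := by
  have hr0 : (0:ℝ) < r := lt_of_lt_of_le one_pos hr
  have hs0 : (0:ℝ) < s := lt_of_lt_of_le one_pos hs
  -- marginals
  have hPX0 : ∀ x, 0 ≤ ∑ y, P (x, y) := fun x => sum_nonneg fun y _ => hP (x, y)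
  have hPY0 : ∀ y, 0 ≤ ∑ x, P (x, y) := fun y => sum_nonneg fun x _ => hP (x, y)
  have hQX0 : ∀ x, 0 ≤ ∑ y, Q (x, y) := fun x => sum_nonneg fun y _ => hQ0 (x, y)
  have hQY0 : ∀ y, 0 ≤ ∑ x, Q (x, y) := fun y => sum_nonneg fun x _ => hQ0 (x, y)
  have hPX1 : ∑ x, ∑ y, P (x, y) = 1 := by rw [← Fintype.sum_prod_type]; exact hP1
  have hPY1 : ∑ y, ∑ x, P (x, y) = 1 := by rw [← Fintype.sum_prod_type_right]; exact hP1
  have habsX : ∀ x, (∑ y, P (x, y)) = 0 → (∑ y, Q (x, y)) = 0 := by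
    intro x hx
    have h0 : ∀ y ∈ univ, P (x, y) = 0 :=
      (sum_eq_zero_iff_of_nonneg (fun y _ => hP (x, y))).1 hx
    exact sum_eq_zero fun y _ => habs (x, y) (h0 y (mem_univ y))
  have habsY : ∀ y, (∑ x, P (x, y)) = 0 → (∑ x, Q (x, y)) = 0 := by
    intro y hy
    have h0 : ∀ x ∈ univ, P (x, y) = 0 :=
      (sum_eq_zero_iff_of_nonneg (fun x _ => hP (x, y))).1 hy
    exact sum_eq_zero fun x _ => habs (x, y) (h0 x (mem_univ x))
  rw [ge_iff_le]
  apply le_of_forall_pos_le_add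
  intro ε hε
  set ε' := ε / 2 with hε'
  have hε'0 : 0 < ε' := by positivity
  -- tilting functions
  set u : ΩX → ℝ := fun x => if (∑ y, Q (x, y)) = 0 then ε' else (∑ y, Q (x, y)) / (∑ y, P (x, y)) with hu_def
  set v : ΩY → ℝ := fun y => if (∑ x, Q (x, y)) = 0 then ε' else (∑ x, Q (x, y)) / (∑ x, P (x, y)) with hv_def
  have hu : ∀ x, 0 < u x := by
    intro x
    rw [hu_def]
    by_cases h : (∑ y, Q (x, y)) = 0
    · simpa [h] using hε'0
    · have hq : 0 < ∑ y, Q (x, y) := lt_of_le_of_ne (hQX0 x) (Ne.symm h)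
      have hp : 0 < ∑ y, P (x, y) :=
        lt_of_le_of_ne (hPX0 x) (fun hc => h (habsX x hc.symm))
      simpa [h] using div_pos hq hp
  have hv : ∀ y, 0 < v y := by
    intro y
    rw [hv_def]
    by_cases h : (∑ x, Q (x, y)) = 0
    · simpa [h] using hε'0
    · have hq : 0 < ∑ x, Q (x, y) := lt_of_le_of_ne (hQY0 y) (Ne.symm h)
      have hp : 0 < ∑ x, P (x, y) :=
        lt_of_le_of_ne (hPY0 y) (fun hc => h (habsY y hc.symm))
      simpa [h] using div_pos hq hp
  -- apply HC to u^(1/r), v^(1/s)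
  have hHCuv := hHC (fun x => u x ^ (1 / r)) (fun y => v y ^ (1 / s))
  have hfr : ∀ x, |u x ^ (1 / r)| ^ r = u x := by
    intro x
    rw [abs_of_nonneg (Real.rpow_nonneg (hu x).le _), ← Real.rpow_mul (hu x).le,
      one_div_mul_cancel (ne_of_gt hr0), Real.rpow_one]
  have hgs : ∀ y, |v y ^ (1 / s)| ^ s = v y := by
    intro y
    rw [abs_of_nonneg (Real.rpow_nonneg (hv y).le _), ← Real.rpow_mul (hv y).le,
      one_div_mul_cancel (ne_of_gt hs0), Real.rpow_one]
  simp only [hfr, hgs] at hHCuv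
  -- bound the marginal moment sums
  have hAu : ∑ x, (∑ y, P (x, y)) * u x ≤ 1 + ε' := by
    have hb : ∀ x, (∑ y, P (x, y)) * u x ≤ (∑ y, Q (x, y)) + ε' * (∑ y, P (x, y)) := by
      intro x
      rw [hu_def]
      by_cases h : (∑ y, Q (x, y)) = 0
      · simp [h, mul_comm]
      · have hp : 0 < ∑ y, P (x, y) :=
          lt_of_le_of_ne (hPX0 x) (fun hc => h (habsX x hc.symm))
        simp only [h, if_false]
        rw [mul_div_cancel₀ _ (ne_of_gt hp)]
        nlinarith [mul_pos hε'0 hp]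
    calc ∑ x, (∑ y, P (x, y)) * u x
        ≤ ∑ x, ((∑ y, Q (x, y)) + ε' * (∑ y, P (x, y))) := sum_le_sum fun x _ => hb x
      _ = 1 + ε' := by
          rw [sum_add_distrib, ← mul_sum, hPX1, ← Fintype.sum_prod_type, hQ1, mul_one]
  have hAv : ∑ y, (∑ x, P (x, y)) * v y ≤ 1 + ε' := by
    have hb : ∀ y, (∑ x, P (x, y)) * v y ≤ (∑ x, Q (x, y)) + ε' * (∑ x, P (x, y)) := by
      intro y
      rw [hv_def]
      by_cases h : (∑ x, Q (x, y)) = 0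
      · simp [h, mul_comm]
      · have hp : 0 < ∑ x, P (x, y) :=
          lt_of_le_of_ne (hPY0 y) (fun hc => h (habsY y hc.symm))
        simp only [h, if_false]
        rw [mul_div_cancel₀ _ (ne_of_gt hp)]
        nlinarith [mul_pos hε'0 hp]
    calc ∑ y, (∑ x, P (x, y)) * v y
        ≤ ∑ y, ((∑ x, Q (x, y)) + ε' * (∑ x, P (x, y))) := sum_le_sum fun y _ => hb y
      _ = 1 + ε' := by
          rw [sum_add_distrib, ← mul_sum, hPY1, ← Fintype.sum_prod_type_right, hQ1, mul_one]
  have hsum_nonneg_u : 0 ≤ ∑ x, (∑ y, P (x, y)) * u x :=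
    sum_nonneg fun x _ => mul_nonneg (hPX0 x) (hu x).le
  have hsum_nonneg_v : 0 ≤ ∑ y, (∑ x, P (x, y)) * v y :=
    sum_nonneg fun y _ => mul_nonneg (hPY0 y) (hv y).le
  have hε'1 : (0:ℝ) < 1 + ε' := by linarith
  have hRHS : (∑ x, (∑ y, P (x, y)) * u x) ^ (1 / r) * (∑ y, (∑ x, P (x, y)) * v y) ^ (1 / s)
      ≤ (1 + ε') ^ (1 / r) * (1 + ε') ^ (1 / s) := by
    apply mul_le_mul
    · exact Real.rpow_le_rpow hsum_nonneg_u hAu (by positivity)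
    · exact Real.rpow_le_rpow hsum_nonneg_v hAv (by positivity)
    · exact Real.rpow_nonneg hsum_nonneg_v _
    · exact Real.rpow_nonneg hε'1.le _
  have hE : ∑ z : ΩX × ΩY, P z * u z.1 ^ (1 / r) * v z.2 ^ (1 / s)
      ≤ (1 + ε') ^ (1 / r) * (1 + ε') ^ (1 / s) := le_trans hHCuv hRHS
  -- Donsker-Varadhan step
  set w : ΩX × ΩY → ℝ := fun z => u z.1 ^ (1 / r) * v z.2 ^ (1 / s) with hw_def
  have hw : ∀ z, 0 < w z := fun z =>
    mul_pos (Real.rpow_pos_of_pos (hu z.1) _) (Real.rpow_pos_of_pos (hv z.2) _)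
  have hDV := dv_aux Q P w hQ0 hP hQ1 habs hw
  have hPw : ∑ z, P z * w z = ∑ z : ΩX × ΩY, P z * u z.1 ^ (1 / r) * v z.2 ^ (1 / s) :=
    sum_congr rfl fun z _ => by rw [hw_def, mul_assoc]
  have hPwpos : 0 < ∑ z, P z * w z := by
    obtain ⟨z₀, hz₀⟩ : ∃ z, 0 < P z := by
      by_contra hcon
      push_neg at hcon
      have : ∀ z, P z = 0 := fun z => le_antisymm (hcon z) (hP z)
      simp [this] at hP1
    exact lt_of_lt_of_le (mul_pos hz₀ (hw z₀))
      (single_le_sum (fun z _ => mul_nonneg (hP z) (hw z).le) (mem_univ z₀))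
  have hlog : Real.log (∑ z, P z * w z) ≤ ε := by
    have h1 : Real.log (∑ z, P z * w z)
        ≤ Real.log ((1 + ε') ^ (1 / r) * (1 + ε') ^ (1 / s)) := by
      apply Real.log_le_log hPwpos
      rw [hPw]; exact hE
    have h2 : Real.log ((1 + ε') ^ (1 / r) * (1 + ε') ^ (1 / s))
        = (1 / r) * Real.log (1 + ε') + (1 / s) * Real.log (1 + ε') := by
      rw [Real.log_mul (ne_of_gt (Real.rpow_pos_of_pos hε'1 _))
        (ne_of_gt (Real.rpow_pos_of_pos hε'1 _)), Real.log_rpow hε'1, Real.log_rpow hε'1]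
    have h3 : Real.log (1 + ε') ≤ ε' := by
      have := Real.log_le_sub_one_of_pos hε'1
      linarith
    have h4 : 0 ≤ Real.log (1 + ε') := Real.log_nonneg (by linarith)
    have h5 : 1 / r ≤ 1 := by rw [div_le_one hr0]; exact hr
    have h6 : 1 / s ≤ 1 := by rw [div_le_one hs0]; exact hs
    nlinarith
  -- compute the entropy-like sum
  have hQw : ∑ z, Q z * Real.log (w z)
      = (1 / r) * ∑ z, Q z * Real.log (u z.1) + (1 / s) * ∑ z, Q z * Real.log (v z.2) := by
    rw [mul_sum, mul_sum, ← sum_add_distrib]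
    refine sum_congr rfl fun z _ => ?_
    rw [hw_def]
    show Q z * Real.log (u z.1 ^ (1/r) * v z.2 ^ (1/s)) = _
    rw [Real.log_mul (ne_of_gt (Real.rpow_pos_of_pos (hu z.1) _))
      (ne_of_gt (Real.rpow_pos_of_pos (hv z.2) _)), Real.log_rpow (hu z.1),
      Real.log_rpow (hv z.2)]
    ring
  have hQu : ∑ z : ΩX × ΩY, Q z * Real.log (u z.1)
      = ∑ x, (∑ y, Q (x, y)) * Real.log ((∑ y, Q (x, y)) / (∑ y, P (x, y))) := by
    rw [Fintype.sum_prod_type]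
    refine sum_congr rfl fun x _ => ?_
    show ∑ y, Q (x, y) * Real.log (u x) = _
    rw [← sum_mul]
    by_cases h : (∑ y, Q (x, y)) = 0
    · simp [h]
    · rw [hu_def]; simp only [h, if_false]
  have hQv : ∑ z : ΩX × ΩY, Q z * Real.log (v z.2)
      = ∑ y, (∑ x, Q (x, y)) * Real.log ((∑ x, Q (x, y)) / (∑ x, P (x, y))) := by
    rw [Fintype.sum_prod_type_right]
    refine sum_congr rfl fun y _ => ?_
    show ∑ x, Q (x, y) * Real.log (v y) = _
    rw [← sum_mul]
    by_cases h : (∑ x, Q (x, y)) = 0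
    · simp [h]
    · rw [hv_def]; simp only [h, if_false]
  rw [hQw, hQu, hQv] at hDV
  have e1 : (1 / r) * (∑ x, (∑ y, Q (x, y)) * Real.log ((∑ y, Q (x, y)) / (∑ y, P (x, y))))
      = (∑ x, (∑ y, Q (x, y)) * Real.log ((∑ y, Q (x, y)) / (∑ y, P (x, y)))) / r := by ring
  have e2 : (1 / s) * (∑ y, (∑ x, Q (x, y)) * Real.log ((∑ x, Q (x, y)) / (∑ x, P (x, y))))
      = (∑ y, (∑ x, Q (x, y)) * Real.log ((∑ x, Q (x, y)) / (∑ x, P (x, y)))) / s := by ring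
  linarith

open Finset in
lemma backward {ΩX ΩY : Type*} [Fintype ΩX] [Fintype ΩY]
    (P : ΩX × ΩY → ℝ) (hP : ∀ z, 0 ≤ P z) (hP1 : ∑ z, P z = 1)
    (r s : ℝ) (hr : 1 ≤ r) (hs : 1 ≤ s)
    (hKL : ∀ Q : ΩX × ΩY → ℝ, (∀ z, 0 ≤ Q z) → ∑ z, Q z = 1 →
        (∀ z, P z = 0 → Q z = 0) →
        ∑ z, Q z * Real.log (Q z / P z)
          ≥ (∑ x, (∑ y, Q (x, y)) * Real.log ((∑ y, Q (x, y)) / (∑ y, P (x, y)))) / r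
            + (∑ y, (∑ x, Q (x, y)) * Real.log ((∑ x, Q (x, y)) / (∑ x, P (x, y)))) / s)
    (f : ΩX → ℝ) (g : ΩY → ℝ) :
    ∑ z, P z * f z.1 * g z.2
      ≤ (∑ x, (∑ y, P (x, y)) * |f x| ^ r) ^ (1 / r)
        * (∑ y, (∑ x, P (x, y)) * |g y| ^ s) ^ (1 / s) := by
  have hr0 : (0:ℝ) < r := lt_of_lt_of_le one_pos hr
  have hs0 : (0:ℝ) < s := lt_of_lt_of_le one_pos hs
  have hPX0 : ∀ x, 0 ≤ ∑ y, P (x, y) := fun x => sum_nonneg fun y _ => hP (x, y)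
  have hPY0 : ∀ y, 0 ≤ ∑ x, P (x, y) := fun y => sum_nonneg fun x _ => hP (x, y)
  have hPX1 : ∑ x, ∑ y, P (x, y) = 1 := by rw [← Fintype.sum_prod_type]; exact hP1
  have hPY1 : ∑ y, ∑ x, P (x, y) = 1 := by rw [← Fintype.sum_prod_type_right]; exact hP1
  set F : ΩX → ℝ := fun x => |f x| with hF_def
  set G : ΩY → ℝ := fun y => |g y| with hG_def
  set A : ℝ := ∑ x, (∑ y, P (x, y)) * F x ^ r with hA_def
  set B : ℝ := ∑ y, (∑ x, P (x, y)) * G y ^ s with hB_def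
  have hA0 : 0 ≤ A := sum_nonneg fun x _ =>
    mul_nonneg (hPX0 x) (Real.rpow_nonneg (abs_nonneg _) _)
  have hB0 : 0 ≤ B := sum_nonneg fun y _ =>
    mul_nonneg (hPY0 y) (Real.rpow_nonneg (abs_nonneg _) _)
  set E : ℝ := ∑ z : ΩX × ΩY, P z * F z.1 * G z.2 with hE_def
  have hE0 : 0 ≤ E := sum_nonneg fun z _ =>
    mul_nonneg (mul_nonneg (hP z) (abs_nonneg _)) (abs_nonneg _)
  have hLHS : ∑ z, P z * f z.1 * g z.2 ≤ E := by
    refine sum_le_sum fun z _ => ?_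
    calc P z * f z.1 * g z.2 ≤ |P z * f z.1 * g z.2| := le_abs_self _
      _ = P z * F z.1 * G z.2 := by
          rw [abs_mul, abs_mul, abs_of_nonneg (hP z)]
  -- suffices to bound E
  suffices hEb : E ≤ A ^ (1 / r) * B ^ (1 / s) by exact le_trans hLHS hEb
  rcases hE0.lt_or_eq with hEpos | hEzero
  swap
  · rw [← hEzero]
    exact mul_nonneg (Real.rpow_nonneg hA0 _) (Real.rpow_nonneg hB0 _)
  -- the tilted distribution
  set Q : ΩX × ΩY → ℝ := fun z => P z * F z.1 * G z.2 / E with hQ_def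
  have hQ0 : ∀ z, 0 ≤ Q z := fun z => div_nonneg
    (mul_nonneg (mul_nonneg (hP z) (abs_nonneg _)) (abs_nonneg _)) hE0
  have hQ1 : ∑ z, Q z = 1 := by
    rw [hQ_def, ← sum_div, ← hE_def, div_self (ne_of_gt hEpos)]
  have habsQ : ∀ z, P z = 0 → Q z = 0 := by
    intro z hz; rw [hQ_def]; simp [hz]
  have hKLQ := hKL Q hQ0 hQ1 habsQ
  have hQX0 : ∀ x, 0 ≤ ∑ y, Q (x, y) := fun x => sum_nonneg fun y _ => hQ0 (x, y)
  have hQY0 : ∀ y, 0 ≤ ∑ x, Q (x, y) := fun y => sum_nonneg fun x _ => hQ0 (x, y)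
  have hQX1 : ∑ x, ∑ y, Q (x, y) = 1 := by rw [← Fintype.sum_prod_type]; exact hQ1
  have hQY1 : ∑ y, ∑ x, Q (x, y) = 1 := by rw [← Fintype.sum_prod_type_right]; exact hQ1
  have habsX : ∀ x, (∑ y, P (x, y)) = 0 → (∑ y, Q (x, y)) = 0 := by
    intro x hx
    have h0 : ∀ y ∈ univ, P (x, y) = 0 :=
      (sum_eq_zero_iff_of_nonneg (fun y _ => hP (x, y))).1 hx
    exact sum_eq_zero fun y _ => habsQ (x, y) (h0 y (mem_univ y))
  have habsY : ∀ y, (∑ x, P (x, y)) = 0 → (∑ x, Q (x, y)) = 0 := by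
    intro y hy
    have h0 : ∀ x ∈ univ, P (x, y) = 0 :=
      (sum_eq_zero_iff_of_nonneg (fun x _ => hP (x, y))).1 hy
    exact sum_eq_zero fun x _ => habsQ (x, y) (h0 x (mem_univ x))
  -- positivity of F on support of marginals
  have hFpos : ∀ x, (∑ y, Q (x, y)) ≠ 0 → 0 < F x := by
    intro x hx
    rcases (abs_nonneg (f x)).lt_or_eq with h | h
    · exact h
    · exfalso; apply hx
      refine sum_eq_zero fun y _ => ?_
      rw [hQ_def]
      show P (x, y) * F x * G y / E = 0
      rw [show F x = 0 from h.symm, mul_zero, zero_mul, zero_div]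
  have hGpos : ∀ y, (∑ x, Q (x, y)) ≠ 0 → 0 < G y := by
    intro y hy
    rcases (abs_nonneg (g y)).lt_or_eq with h | h
    · exact h
    · exfalso; apply hy
      refine sum_eq_zero fun x _ => ?_
      rw [hQ_def]
      show P (x, y) * F x * G y / E = 0
      rw [show G y = 0 from h.symm, mul_zero, zero_div]
  -- decompose the KL divergence
  set SF : ℝ := ∑ z : ΩX × ΩY, Q z * Real.log (F z.1) with hSF_def
  set SG : ℝ := ∑ z : ΩX × ΩY, Q z * Real.log (G z.2) with hSG_def
  have hD : ∑ z, Q z * Real.log (Q z / P z) = SF + SG - Real.log E := by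
    have hterm : ∀ z, Q z * Real.log (Q z / P z)
        = Q z * Real.log (F z.1) + Q z * Real.log (G z.2) - Q z * Real.log E := by
      intro z
      rcases (hQ0 z).lt_or_eq with h | h
      · have hPz : P z ≠ 0 := fun hc => absurd (habsQ z hc) (ne_of_gt h)
        have hFz : F z.1 ≠ 0 := by
          intro hc
          apply ne_of_gt h
          rw [hQ_def]; show P z * F z.1 * G z.2 / E = 0
          rw [hc, mul_zero, zero_mul, zero_div]
        have hGz : G z.2 ≠ 0 := by
          intro hc
          apply ne_of_gt h
          rw [hQ_def]; show P z * F z.1 * G z.2 / E = 0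
          rw [hc, mul_zero, zero_div]
        have hQP : Q z / P z = F z.1 * G z.2 / E := by
          rw [hQ_def]
          field_simp
        rw [hQP, Real.log_div (mul_ne_zero hFz hGz) (ne_of_gt hEpos),
          Real.log_mul hFz hGz]
        ring
      · rw [← h]; ring
    rw [funext hterm, sum_sub_distrib, sum_add_distrib, ← sum_mul, hQ1, one_mul]
  -- marginal DV bounds, with regularization δ
  have key : ∀ δ : ℝ, 0 < δ → E ≤ (A + δ) ^ (1 / r) * (B + δ) ^ (1 / s) := by
    intro δ hδ
    have hAδ : 0 < A + δ := by linarith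
    have hBδ : 0 < B + δ := by linarith
    -- X marginal
    have hDX := dv_aux (fun x => ∑ y, Q (x, y)) (fun x => ∑ y, P (x, y))
      (fun x => F x ^ r + δ) hQX0 hPX0 hQX1 habsX
      (fun x => by positivity)
    have hPwX : ∑ x, (∑ y, P (x, y)) * (F x ^ r + δ) = A + δ := by
      simp only [mul_add]
      rw [sum_add_distrib, ← hA_def, ← sum_mul, hPX1, one_mul]
    have hQwX : r * SF ≤ ∑ x, (∑ y, Q (x, y)) * Real.log (F x ^ r + δ) := by
      have hSFx : SF = ∑ x, (∑ y, Q (x, y)) * Real.log (F x) := by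
        rw [hSF_def, Fintype.sum_prod_type]
        refine sum_congr rfl fun x _ => ?_
        show ∑ y, Q (x, y) * Real.log (F x) = _
        rw [← sum_mul]
      rw [hSFx, mul_sum]
      refine sum_le_sum fun x _ => ?_
      by_cases h : (∑ y, Q (x, y)) = 0
      · simp [h]
      · have hFx : 0 < F x := hFpos x h
        have h1 : Real.log (F x ^ r) ≤ Real.log (F x ^ r + δ) :=
          Real.log_le_log (Real.rpow_pos_of_pos hFx r) (by linarith)
        rw [Real.log_rpow hFx] at h1
        calc r * ((∑ y, Q (x, y)) * Real.log (F x))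
            = (∑ y, Q (x, y)) * (r * Real.log (F x)) := by ring
          _ ≤ _ := mul_le_mul_of_nonneg_left h1 (hQX0 x)
    have hDX' : r * SF - Real.log (A + δ)
        ≤ ∑ x, (∑ y, Q (x, y)) * Real.log ((∑ y, Q (x, y)) / (∑ y, P (x, y))) := by
      have hbeta : (∑ x, (∑ y, Q (x, y)) * Real.log (F x ^ r + δ))
            - Real.log (∑ x, (∑ y, P (x, y)) * (F x ^ r + δ))
          ≤ ∑ x, (∑ y, Q (x, y)) * Real.log ((∑ y, Q (x, y)) / (∑ y, P (x, y))) := hDX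
      rw [hPwX] at hbeta
      linarith
    -- Y marginal
    have hDY := dv_aux (fun y => ∑ x, Q (x, y)) (fun y => ∑ x, P (x, y))
      (fun y => G y ^ s + δ) hQY0 hPY0 hQY1 habsY
      (fun y => by positivity)
    have hPwY : ∑ y, (∑ x, P (x, y)) * (G y ^ s + δ) = B + δ := by
      simp only [mul_add]
      rw [sum_add_distrib, ← hB_def, ← sum_mul, hPY1, one_mul]
    have hQwY : s * SG ≤ ∑ y, (∑ x, Q (x, y)) * Real.log (G y ^ s + δ) := by
      have hSGy : SG = ∑ y, (∑ x, Q (x, y)) * Real.log (G y) := by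
        rw [hSG_def, Fintype.sum_prod_type_right]
        refine sum_congr rfl fun y _ => ?_
        show ∑ x, Q (x, y) * Real.log (G y) = _
        rw [← sum_mul]
      rw [hSGy, mul_sum]
      refine sum_le_sum fun y _ => ?_
      by_cases h : (∑ x, Q (x, y)) = 0
      · simp [h]
      · have hGy : 0 < G y := hGpos y h
        have h1 : Real.log (G y ^ s) ≤ Real.log (G y ^ s + δ) :=
          Real.log_le_log (Real.rpow_pos_of_pos hGy s) (by linarith)
        rw [Real.log_rpow hGy] at h1
        calc s * ((∑ x, Q (x, y)) * Real.log (G y))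
            = (∑ x, Q (x, y)) * (s * Real.log (G y)) := by ring
          _ ≤ _ := mul_le_mul_of_nonneg_left h1 (hQY0 y)
    have hDY' : s * SG - Real.log (B + δ)
        ≤ ∑ y, (∑ x, Q (x, y)) * Real.log ((∑ x, Q (x, y)) / (∑ x, P (x, y))) := by
      have hbeta : (∑ y, (∑ x, Q (x, y)) * Real.log (G y ^ s + δ))
            - Real.log (∑ y, (∑ x, P (x, y)) * (G y ^ s + δ))
          ≤ ∑ y, (∑ x, Q (x, y)) * Real.log ((∑ x, Q (x, y)) / (∑ x, P (x, y))) := hDY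
      rw [hPwY] at hbeta
      linarith
    -- combine
    have h1 : (r * SF - Real.log (A + δ)) / r
        ≤ (∑ x, (∑ y, Q (x, y)) * Real.log ((∑ y, Q (x, y)) / (∑ y, P (x, y)))) / r :=
      (div_le_div_iff_of_pos_right hr0).mpr hDX'
    have h2 : (s * SG - Real.log (B + δ)) / s
        ≤ (∑ y, (∑ x, Q (x, y)) * Real.log ((∑ x, Q (x, y)) / (∑ x, P (x, y)))) / s :=
      (div_le_div_iff_of_pos_right hs0).mpr hDY'
    have e1 : (r * SF - Real.log (A + δ)) / r = SF - Real.log (A + δ) / r := by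
      field_simp
    have e2 : (s * SG - Real.log (B + δ)) / s = SG - Real.log (B + δ) / s := by
      field_simp
    have hloggoal : Real.log E ≤ Real.log (A + δ) / r + Real.log (B + δ) / s := by
      rw [hD] at hKLQ
      rw [e1] at h1
      rw [e2] at h2
      linarith
    calc E = Real.exp (Real.log E) := (Real.exp_log hEpos).symm
      _ ≤ Real.exp (Real.log (A + δ) / r + Real.log (B + δ) / s) :=
          Real.exp_le_exp.mpr hloggoal
      _ = (A + δ) ^ (1 / r) * (B + δ) ^ (1 / s) := by
          rw [show Real.log (A + δ) / r = Real.log (A + δ) * (1 / r) by ring,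
            show Real.log (B + δ) / s = Real.log (B + δ) * (1 / s) by ring,
            Real.exp_add, ← Real.rpow_def_of_pos hAδ, ← Real.rpow_def_of_pos hBδ]
  -- take δ → 0⁺
  have htend : Filter.Tendsto (fun δ : ℝ => (A + δ) ^ (1 / r) * (B + δ) ^ (1 / s))
      (nhdsWithin 0 (Set.Ioi 0)) (nhds (A ^ (1 / r) * B ^ (1 / s))) := by
    have hca : ContinuousAt (fun δ : ℝ => (A + δ) ^ (1 / r)) 0 := by
      have hinner : ContinuousAt (fun δ : ℝ => A + δ) 0 :=
        (continuous_const.add continuous_id).continuousAt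
      have houter : ContinuousAt (fun t : ℝ => t ^ (1 / r)) ((fun δ : ℝ => A + δ) 0) :=
        Real.continuousAt_rpow_const _ _ (Or.inr (by positivity))
      exact houter.comp hinner
    have hcb : ContinuousAt (fun δ : ℝ => (B + δ) ^ (1 / s)) 0 := by
      have hinner : ContinuousAt (fun δ : ℝ => B + δ) 0 :=
        (continuous_const.add continuous_id).continuousAt
      have houter : ContinuousAt (fun t : ℝ => t ^ (1 / s)) ((fun δ : ℝ => B + δ) 0) :=
        Real.continuousAt_rpow_const _ _ (Or.inr (by positivity))
      exact houter.comp hinner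
    have := (hca.mul hcb).tendsto
    convert this.mono_left nhdsWithin_le_nhds using 2 <;> simp
  refine ge_of_tendsto htend ?_
  filter_upwards [self_mem_nhdsWithin] with δ hδ
  exact key δ hδ

/-- Equivalence of `(r,s)`-hypercontractivity of a joint distribution on a finite space
with the KL-divergence inequality `D(Q_XY‖P_XY) ≥ D(Q_X‖P_X)/r + D(Q_Y‖P_Y)/s`. -/
theorem hypercontractivity_iff_divergence
    {ΩX ΩY : Type*} [Fintype ΩX] [Fintype ΩY]
    (P : ΩX × ΩY → ℝ) (hP : ∀ z, 0 ≤ P z) (hP1 : ∑ z, P z = 1)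
    (r s : ℝ) (hr : 1 ≤ r) (hs : 1 ≤ s) :
    ((∀ (f : ΩX → ℝ) (g : ΩY → ℝ),
        ∑ z, P z * f z.1 * g z.2
          ≤ (∑ x, (∑ y, P (x, y)) * |f x| ^ r) ^ (1 / r)
            * (∑ y, (∑ x, P (x, y)) * |g y| ^ s) ^ (1 / s))
      ↔
      (∀ Q : ΩX × ΩY → ℝ, (∀ z, 0 ≤ Q z) → ∑ z, Q z = 1 →
        (∀ z, P z = 0 → Q z = 0) →
        ∑ z, Q z * Real.log (Q z / P z)
          ≥ (∑ x, (∑ y, Q (x, y)) * Real.log ((∑ y, Q (x, y)) / (∑ y, P (x, y)))) / r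
            + (∑ y, (∑ x, Q (x, y)) * Real.log ((∑ x, Q (x, y)) / (∑ x, P (x, y)))) / s)) :=
  ⟨fun hHC => forward P hP hP1 r s hr hs hHC,
   fun hKL f g => backward P hP hP1 r s hr hs hKL f g⟩
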